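/- Let Y and Y' be real random variables on a common probability space that are conditionally independent given a random vector X and satisfy P(Y' ∈ · | X) = P(Y ∈ · | X) almost surely. Then X and Y are independent if and only if Y and Y' are independent. -/

import Mathlib

open MeasureTheory ProbabilityTheory

variable {Ω : Type*} [mΩ : MeasurableSpace Ω] [StandardBorelSpace Ω] [Nonempty Ω]

/-- `Y'` is a conditionally independent copy of `Y` given `X`:
`Y ⊥ Y' | X` and the conditional distributions of `Y` and `Y'` given `X` coincide. -/
def IsCondIndepCopy {α : Type*} [mα : MeasurableSpace α]
    (μ : Measure Ω) [IsFiniteMeasure μ] (X : Ω → α) (hX : Measurable X)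
    (Y Y' : Ω → ℝ) : Prop :=
  CondIndepFun (mα.comap X) hX.comap_le Y Y' μ ∧
  ∀ s : Set ℝ, MeasurableSet s →
    μ[(Y ⁻¹' s).indicator (fun _ => (1:ℝ)) | mα.comap X] =ᵐ[μ]
      μ[(Y' ⁻¹' s).indicator (fun _ => (1:ℝ)) | mα.comap X]

section Aux

variable {μ : Measure Ω} [IsProbabilityMeasure μ] {m : MeasurableSpace Ω}

lemma aux_indicator_int {A : Set Ω} (hA : MeasurableSet[mΩ] A) :
    Integrable (A.indicator fun _ => (1:ℝ)) μ :=
  (integrable_const (1:ℝ)).indicator hA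

lemma aux_integral_indicator {A : Set Ω} (hA : MeasurableSet[mΩ] A) :
    ∫ ω, A.indicator (fun _ => (1:ℝ)) ω ∂μ = (μ A).toReal := by
  rw [integral_indicator hA, setIntegral_const, measureReal_def, smul_eq_mul, mul_one]

lemma aux_integral_condexp (hm : m ≤ mΩ) {A : Set Ω} (hA : MeasurableSet[mΩ] A) :
    ∫ ω, (μ[A.indicator (fun _ => (1:ℝ)) | m]) ω ∂μ = (μ A).toReal := by
  haveI : SigmaFinite (μ.trim hm) := by
    have : IsFiniteMeasure (μ.trim hm) := isFiniteMeasure_trim hm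
    infer_instance
  rw [integral_condExp hm, aux_integral_indicator (mΩ := mΩ) hA]

lemma aux_nonneg {A : Set Ω} :
    0 ≤ᵐ[μ] μ[A.indicator (fun _ => (1:ℝ)) | m] :=
  condExp_nonneg (Filter.Eventually.of_forall fun ω =>
    Set.indicator_nonneg (fun _ _ => zero_le_one) ω)

lemma aux_le_one (hm : m ≤ mΩ) {A : Set Ω} (hA : MeasurableSet[mΩ] A) :
    μ[A.indicator (fun _ => (1:ℝ)) | m] ≤ᵐ[μ] fun _ => (1:ℝ) := by
  have h := condExp_mono (m := m) (aux_indicator_int (mΩ := mΩ) (μ := μ) hA) (integrable_const (1:ℝ))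
    (Filter.Eventually.of_forall fun ω => by
      by_cases hω : ω ∈ A <;> simp [Set.indicator, hω])
  simpa [condExp_const (μ := μ) hm (1:ℝ)] using h

end Aux

/-- For the Markov product `(Y,Y')` of `(X,Y)`, the variables `X` and `Y` are
independent if and only if `Y` and `Y'` are independent. -/
theorem indep_iff_indep_markov_product {p : ℕ}
    (μ : Measure Ω) [IsProbabilityMeasure μ]
    (X : Ω → (Fin p → ℝ)) (hX : Measurable X)
    (Y Y' : Ω → ℝ) (hY : Measurable Y) (hY' : Measurable Y')
    (hcopy : IsCondIndepCopy μ X hX Y Y') :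
    IndepFun X Y μ ↔ IndepFun Y Y' μ := by
  obtain ⟨hci, hcop⟩ := hcopy
  set m : MeasurableSpace Ω :=
    (inferInstance : MeasurableSpace (Fin p → ℝ)).comap X with hm_def
  have hm : m ≤ mΩ := hX.comap_le
  letI : MeasurableSpace Ω := mΩ
  haveI : SigmaFinite (μ.trim hm) := by
    have : IsFiniteMeasure (μ.trim hm) := isFiniteMeasure_trim hm
    infer_instance
  rw [condIndepFun_iff_condExp_inter_preimage_eq_mul hY hY'] at hci
  -- Y and Y' have the same distribution
  have hmeas_eq : ∀ t : Set ℝ, MeasurableSet t → μ (Y' ⁻¹' t) = μ (Y ⁻¹' t) := by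
    intro t ht
    have h := integral_congr_ae (hcop t ht)
    rw [aux_integral_condexp (mΩ := mΩ) hm (hY ht), aux_integral_condexp (mΩ := mΩ) hm (hY' ht)] at h
    exact (ENNReal.toReal_eq_toReal_iff' (measure_ne_top _ _) (measure_ne_top _ _)).mp h.symm
  -- integral of product of conditional expectations
  have hprod : ∀ (s t : Set ℝ), MeasurableSet s → MeasurableSet t →
      ∫ ω, (μ[(Y ⁻¹' s).indicator (fun _ => (1:ℝ)) | m]) ω *
          (μ[(Y' ⁻¹' t).indicator (fun _ => (1:ℝ)) | m]) ω ∂μ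
        = (μ (Y ⁻¹' s ∩ Y' ⁻¹' t)).toReal := by
    intro s t hs ht
    rw [← integral_congr_ae (hci s t hs ht),
      aux_integral_condexp (mΩ := mΩ) hm ((hY hs).inter (hY' ht))]
  constructor
  · -- X ⟂ Y → Y ⟂ Y'
    intro hXY
    have hconst : ∀ t : Set ℝ, MeasurableSet t →
        μ[(Y ⁻¹' t).indicator (fun _ => (1:ℝ)) | m] =ᵐ[μ]
          fun _ => (μ (Y ⁻¹' t)).toReal := by
      intro t ht
      have hsm : StronglyMeasurable[MeasurableSpace.comap Y (borel ℝ)]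
          ((Y ⁻¹' t).indicator fun _ => (1:ℝ)) :=
        stronglyMeasurable_const.indicator ⟨t, ht, rfl⟩
      have hind := (IndepFun_iff_Indep Y X μ).mp hXY.symm
      have h := condExp_indep_eq (μ := μ) hY.comap_le hm hsm hind
      refine h.trans ?_
      rw [show (∫ ω, (Y ⁻¹' t).indicator (fun _ => (1:ℝ)) ω ∂μ) = (μ (Y ⁻¹' t)).toReal from
        aux_integral_indicator (mΩ := mΩ) (hY ht)]
    rw [indepFun_iff_measure_inter_preimage_eq_mul]
    intro s t hs ht
    have h1 := hconst s hs
    have h2 : μ[(Y' ⁻¹' t).indicator (fun _ => (1:ℝ)) | m] =ᵐ[μ]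
        fun _ => (μ (Y ⁻¹' t)).toReal := (hcop t ht).symm.trans (hconst t ht)
    have hI : (μ (Y ⁻¹' s ∩ Y' ⁻¹' t)).toReal
        = (μ (Y ⁻¹' s)).toReal * (μ (Y ⁻¹' t)).toReal := by
      rw [← hprod s t hs ht]
      rw [integral_congr_ae (g := fun _ => (μ (Y ⁻¹' s)).toReal * (μ (Y ⁻¹' t)).toReal) ?_]
      · simp
      · filter_upwards [h1, h2] with ω e1 e2
        rw [e1, e2]
    refine (ENNReal.toReal_eq_toReal_iff' (measure_ne_top _ _)
      (ENNReal.mul_ne_top (measure_ne_top _ _) (measure_ne_top _ _))).mp ?_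
    rw [ENNReal.toReal_mul, hI, hmeas_eq t ht]
  · -- Y ⟂ Y' → X ⟂ Y
    intro hYY'
    -- the conditional probability of `Y ∈ t` given `X` is a.s. constant
    have hconst : ∀ t : Set ℝ, MeasurableSet t →
        μ[(Y ⁻¹' t).indicator (fun _ => (1:ℝ)) | m] =ᵐ[μ]
          fun _ => (μ (Y ⁻¹' t)).toReal := by
      intro t ht
      set f := μ[(Y ⁻¹' t).indicator (fun _ => (1:ℝ)) | m] with hf_def
      set a := (μ (Y ⁻¹' t)).toReal with ha_def
      have hf_int : Integrable f μ := integrable_condExp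
      have hf_meas : AEStronglyMeasurable f μ :=
        (stronglyMeasurable_condExp.mono hm).aestronglyMeasurable
      have hff_int : Integrable (fun ω => f ω * f ω) μ := by
        refine Integrable.mono' (integrable_const (1:ℝ)) (hf_meas.mul hf_meas) ?_
        filter_upwards [aux_nonneg (mΩ := mΩ) (μ := μ) (m := m) (A := Y ⁻¹' t),
          aux_le_one (mΩ := mΩ) hm (hY ht)] with ω h0 h1
        rw [Real.norm_eq_abs, abs_of_nonneg (mul_nonneg h0 h0)]
        calc f ω * f ω ≤ 1 * 1 := mul_le_mul h1 h1 h0 zero_le_one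
        _ = 1 := one_mul 1
      have hintf : ∫ ω, f ω ∂μ = a := aux_integral_condexp (mΩ := mΩ) hm (hY ht)
      have hsq : ∫ ω, f ω * f ω ∂μ = a * a := by
        have e1 : ∫ ω, f ω * f ω ∂μ
            = ∫ ω, f ω * (μ[(Y' ⁻¹' t).indicator (fun _ => (1:ℝ)) | m]) ω ∂μ := by
          refine integral_congr_ae ?_
          filter_upwards [hcop t ht] with ω e
          rw [← e]
        rw [e1, hprod t t ht ht,
          hYY'.measure_inter_preimage_eq_mul t t ht ht, ENNReal.toReal_mul,
          hmeas_eq t ht]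
      have hsq_int : Integrable (fun ω => (f ω - a)^2) μ := by
        have he : (fun ω => (f ω - a)^2)
            = fun ω => (f ω * f ω - (2*a) * f ω) + a^2 := by
          funext ω; ring
        rw [he]
        exact (hff_int.sub (hf_int.const_mul (2*a))).add (integrable_const _)
      have h0 : ∫ ω, (f ω - a)^2 ∂μ = 0 := by
        have e1 : ∫ ω, ((f ω * f ω - (2*a) * f ω) + a^2) ∂μ
            = ∫ ω, (f ω * f ω - (2*a) * f ω) ∂μ + ∫ _ω, (a:ℝ)^2 ∂μ :=
          integral_add (hff_int.sub (hf_int.const_mul (2*a))) (integrable_const _)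
        have e2 : ∫ ω, (f ω * f ω - (2*a) * f ω) ∂μ
            = ∫ ω, f ω * f ω ∂μ - ∫ ω, (2*a) * f ω ∂μ :=
          integral_sub hff_int (hf_int.const_mul (2*a))
        have e3 : ∫ ω, (2*a) * f ω ∂μ = (2*a) * ∫ ω, f ω ∂μ := integral_const_mul _ _
        calc ∫ ω, (f ω - a)^2 ∂μ
            = ∫ ω, ((f ω * f ω - (2*a) * f ω) + a^2) ∂μ :=
              integral_congr_ae (Filter.Eventually.of_forall fun ω => by ring)
          _ = 0 := by
              rw [e1, e2, e3, hintf, hsq, integral_const]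
              simp only [probReal_univ, measure_univ, ENNReal.toReal_one, smul_eq_mul, one_mul]
              ring
      have hz := (integral_eq_zero_iff_of_nonneg_ae
        (Filter.Eventually.of_forall fun ω => sq_nonneg (f ω - a)) hsq_int).mp h0
      filter_upwards [hz] with ω hω
      have : (f ω - a) ^ 2 = 0 := hω
      have := pow_eq_zero_iff (two_ne_zero) |>.mp this
      exact sub_eq_zero.mp this
    rw [indepFun_iff_measure_inter_preimage_eq_mul]
    intro s t hs ht
    have hXs : MeasurableSet[m] (X ⁻¹' s) := ⟨s, hs, rfl⟩
    have hXs' : MeasurableSet[mΩ] (X ⁻¹' s) := hm _ hXs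
    have hI : (μ (X ⁻¹' s ∩ Y ⁻¹' t)).toReal
        = (μ (X ⁻¹' s)).toReal * (μ (Y ⁻¹' t)).toReal := by
      have h1 : ∫ ω in X ⁻¹' s, (Y ⁻¹' t).indicator (fun _ => (1:ℝ)) ω ∂μ
          = (μ (X ⁻¹' s ∩ Y ⁻¹' t)).toReal := by
        rw [setIntegral_indicator (μ := μ) (hY ht), setIntegral_const (μ := μ), measureReal_def, smul_eq_mul, mul_one]
      rw [← h1, ← setIntegral_condExp hm (aux_indicator_int (mΩ := mΩ) (hY ht)) hXs]
      rw [setIntegral_congr_ae (μ := μ) (f := μ[(Y ⁻¹' t).indicator (fun _ => (1:ℝ)) | m])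
        (g := fun _ => (μ (Y ⁻¹' t)).toReal) hXs'
        ((hconst t ht).mono fun ω hω _ => hω)]
      rw [setIntegral_const (μ := μ), measureReal_def, smul_eq_mul]
    refine (ENNReal.toReal_eq_toReal_iff' (measure_ne_top _ _)
      (ENNReal.mul_ne_top (measure_ne_top _ _) (measure_ne_top _ _))).mp ?_
    rw [ENNReal.toReal_mul, hI]
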